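/- (Equality case of Julia's inequality) Let f be holomorphic on an open set containing the upper half-plane ℍ and the point 0, with f(z) ∈ ℍ for all z ∈ ℍ, f(0) = 0, and f not constant. If there exists a point z₀ ∈ ℍ with f'(0) · Im(f(z₀))/|f(z₀)|² = Im(z₀)/|z₀|², then f is a Möbius transformation: there exist real numbers a, b, c, d with a·d − b·c > 0 such that f(z) = (a·z + b)/(c·z + d) for all z ∈ ℍ. -/

import Mathlib

open Complex
open Set Metric

lemma key_sq (u v : ℂ) :
    ‖(u - (starRingEnd ℂ) v)‖ ^ 2
      = ‖(u - v)‖ ^ 2 + 4 * u.im * v.im := by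
  simp only [Complex.sq_norm, Complex.normSq_apply, Complex.sub_re, Complex.sub_im,
    Complex.conj_re, Complex.conj_im]
  ring

lemma sub_conj_ne (u v : ℂ) (hu : 0 < u.im) (hv : 0 < v.im) :
    u - (starRingEnd ℂ) v ≠ 0 := by
  intro h
  have : (u - (starRingEnd ℂ) v).im = 0 := by rw [h]; simp
  simp only [Complex.sub_im, Complex.conj_im, sub_neg_eq_add] at this
  linarith

lemma moeb_lt_one (u v : ℂ) (hu : 0 < u.im) (hv : 0 < v.im) :
    ‖((u - v) / (u - (starRingEnd ℂ) v))‖ < 1 := by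
  have hne := sub_conj_ne u v hu hv
  rw [norm_div, div_lt_one (norm_pos_iff.mpr hne)]
  have h2 : 0 < ‖(u - (starRingEnd ℂ) v)‖ := norm_pos_iff.mpr hne
  nlinarith [key_sq u v, norm_nonneg (u - v)]

/-- Schwarz–Pick inequality on the upper half-plane (pseudo-hyperbolic form). -/
lemma pick (f : ℂ → ℂ) (hf : DifferentiableOn ℂ f {z : ℂ | 0 < z.im})
    (hmap : ∀ z : ℂ, 0 < z.im → 0 < (f z).im)
    (z w : ℂ) (hz : 0 < z.im) (hw : 0 < w.im) :
    ‖((f z - f w) / (f z - (starRingEnd ℂ) (f w)))‖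
      ≤ ‖((z - w) / (z - (starRingEnd ℂ) w))‖ := by
  have hopen : IsOpen {z : ℂ | 0 < z.im} := isOpen_lt continuous_const Complex.continuous_im
  set D : ℂ → ℂ := fun ζ => (w - (starRingEnd ℂ) w * ζ) / (1 - ζ) with hD
  have hden : ∀ ζ : ℂ, ζ ∈ ball (0:ℂ) 1 → (1 : ℂ) - ζ ≠ 0 := by
    intro ζ hζ
    rw [mem_ball_zero_iff] at hζ
    intro h
    rw [sub_eq_zero] at h
    rw [← h] at hζ; simp at hζ
  have hDmem : ∀ ζ : ℂ, ζ ∈ ball (0:ℂ) 1 → 0 < (D ζ).im := by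
    intro ζ hζ
    have h1 := hden ζ hζ
    have hnq : 0 < Complex.normSq (1 - ζ) := Complex.normSq_pos.2 h1
    rw [mem_ball_zero_iff] at hζ
    have hζ2 : Complex.normSq ζ < 1 := by
      have h := Complex.sq_norm ζ
      nlinarith [norm_nonneg ζ]
    simp only [hD, Complex.div_im]
    have hnum : (w - (starRingEnd ℂ) w * ζ).im * (1 - ζ).re
        - (w - (starRingEnd ℂ) w * ζ).re * (1 - ζ).im
        = w.im * (1 - Complex.normSq ζ) := by
      simp only [Complex.sub_im, Complex.sub_re, Complex.mul_im, Complex.mul_re,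
        Complex.conj_re, Complex.conj_im, Complex.one_re, Complex.one_im,
        Complex.normSq_apply]
      ring
    have : (w - (starRingEnd ℂ) w * ζ).im * (1 - ζ).re / Complex.normSq (1 - ζ)
        - (w - (starRingEnd ℂ) w * ζ).re * (1 - ζ).im / Complex.normSq (1 - ζ)
        = w.im * (1 - Complex.normSq ζ) / Complex.normSq (1 - ζ) := by
      rw [div_sub_div_same, hnum]
    rw [this]
    exact div_pos (mul_pos hw (by linarith)) hnq
  set F : ℂ → ℂ := fun ζ => (f (D ζ) - f w) / (f (D ζ) - (starRingEnd ℂ) (f w)) with hF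
  have hD0 : D 0 = w := by simp [hD]
  have hF0 : F 0 = 0 := by simp [hF, hD0]
  have hFdiff : DifferentiableOn ℂ F (ball (0:ℂ) 1) := by
    intro ζ hζ
    have h1 := hden ζ hζ
    have hDd : DifferentiableAt ℂ D ζ :=
      ((differentiableAt_const _).sub ((differentiableAt_const _).mul differentiableAt_id)).div
        ((differentiableAt_const _).sub differentiableAt_id) h1
    have hfd : DifferentiableAt ℂ f (D ζ) :=
      hf.differentiableAt (hopen.mem_nhds (hDmem ζ hζ))
    have hfD : DifferentiableAt ℂ (fun ζ => f (D ζ)) ζ := hfd.comp ζ hDd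
    have hne2 : f (D ζ) - (starRingEnd ℂ) (f w) ≠ 0 :=
      sub_conj_ne _ _ (hmap _ (hDmem ζ hζ)) (hmap _ hw)
    exact ((hfD.sub_const _).div ((hfD.sub_const _)) hne2).differentiableWithinAt
  have hFmaps : MapsTo F (ball (0:ℂ) 1) (ball (F 0) 1) := by
    intro ζ hζ
    rw [hF0, mem_ball_zero_iff]
    exact moeb_lt_one _ _ (hmap _ (hDmem ζ hζ)) (hmap _ hw)
  -- Schwarz
  set ζ₀ : ℂ := (z - w) / (z - (starRingEnd ℂ) w) with hζ₀
  have hζ₀mem : ζ₀ ∈ ball (0:ℂ) 1 := by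
    rw [mem_ball_zero_iff]
    exact moeb_lt_one z w hz hw
  have hDζ₀ : D ζ₀ = z := by
    have h1 : z - (starRingEnd ℂ) w ≠ 0 := sub_conj_ne z w hz hw
    have hwc : w - (starRingEnd ℂ) w ≠ 0 := by
      intro h
      have := congrArg Complex.im h
      simp [Complex.sub_im, Complex.conj_im] at this
      linarith
    have e1 : w - (starRingEnd ℂ) w * ζ₀ = z * (w - (starRingEnd ℂ) w) / (z - (starRingEnd ℂ) w) := by
      rw [hζ₀]; field_simp; ring
    have e2 : (1:ℂ) - ζ₀ = (w - (starRingEnd ℂ) w) / (z - (starRingEnd ℂ) w) := by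
      rw [hζ₀]; field_simp; ring
    show (w - (starRingEnd ℂ) w * ζ₀) / (1 - ζ₀) = z
    rw [e1, e2]
    field_simp
  have := Complex.dist_le_div_mul_dist_of_mapsTo_ball hFdiff (hFmaps.mono_right ball_subset_closedBall) hζ₀mem
  rw [hF0, dist_zero_right, dist_zero_right] at this
  rw [show (1:ℝ)/1 = 1 by norm_num, one_mul] at this
  simpa [hF, hDζ₀] using this

/-- Invariant form of Schwarz–Pick. -/
lemma pick_inv (f : ℂ → ℂ) (hf : DifferentiableOn ℂ f {z : ℂ | 0 < z.im})
    (hmap : ∀ z : ℂ, 0 < z.im → 0 < (f z).im)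
    (z w : ℂ) (hz : 0 < z.im) (hw : 0 < w.im) :
    z.im * w.im / ‖(z - (starRingEnd ℂ) w)‖ ^ 2
      ≤ (f z).im * (f w).im / ‖(f z - (starRingEnd ℂ) (f w))‖ ^ 2 := by
  have h := pick f hf hmap z w hz hw
  have hzc : 0 < ‖(z - (starRingEnd ℂ) w)‖ := norm_pos_iff.mpr (sub_conj_ne z w hz hw)
  have hfc : 0 < ‖(f z - (starRingEnd ℂ) (f w))‖ :=
    norm_pos_iff.mpr (sub_conj_ne _ _ (hmap z hz) (hmap w hw))
  have hB : ‖((z - w) / (z - (starRingEnd ℂ) w))‖ ^ 2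
      = 1 - 4 * z.im * w.im / ‖(z - (starRingEnd ℂ) w)‖ ^ 2 := by
    rw [norm_div, div_pow]
    have := key_sq z w
    field_simp
    linarith
  have hA : ‖((f z - f w) / (f z - (starRingEnd ℂ) (f w)))‖ ^ 2
      = 1 - 4 * (f z).im * (f w).im / ‖(f z - (starRingEnd ℂ) (f w))‖ ^ 2 := by
    rw [norm_div, div_pow]
    have := key_sq (f z) (f w)
    field_simp
    linarith
  have h2 : ‖((f z - f w) / (f z - (starRingEnd ℂ) (f w)))‖ ^ 2
      ≤ ‖((z - w) / (z - (starRingEnd ℂ) w))‖ ^ 2 := by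
    have := norm_nonneg ((f z - f w) / (f z - (starRingEnd ℂ) (f w)))
    nlinarith
  rw [hA, hB] at h2
  have e1 : 4 * z.im * w.im / ‖(z - (starRingEnd ℂ) w)‖ ^ 2
      = 4 * (z.im * w.im / ‖(z - (starRingEnd ℂ) w)‖ ^ 2) := by ring
  have e2 : 4 * (f z).im * (f w).im / ‖(f z - (starRingEnd ℂ) (f w))‖ ^ 2
      = 4 * ((f z).im * (f w).im / ‖(f z - (starRingEnd ℂ) (f w))‖ ^ 2) := by ring
  linarith

open Filter Topology in
/-- Julia's inequality at the boundary point `0`. -/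
lemma julia (U : Set ℂ) (hU : IsOpen U) (hUH : {z : ℂ | 0 < z.im} ⊆ U) (h0U : (0 : ℂ) ∈ U)
    (f : ℂ → ℂ) (hf : DifferentiableOn ℂ f U)
    (hmap : ∀ z : ℂ, 0 < z.im → 0 < (f z).im) (hfix : f 0 = 0)
    (z : ℂ) (hz : 0 < z.im) :
    z.im / ‖z‖ ^ 2 ≤ (deriv f 0).re * (f z).im / ‖(f z)‖ ^ 2 := by
  have hfH : DifferentiableOn ℂ f {z : ℂ | 0 < z.im} := hf.mono hUH
  have hd0 : DifferentiableAt ℂ f 0 := hf.differentiableAt (hU.mem_nhds h0U)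
  have hfz : f z ≠ 0 := by
    intro h
    have := hmap z hz
    rw [h] at this; simp at this
  have hz0 : z ≠ 0 := by
    intro h; rw [h] at hz; simp at hz
  set a : ℝ := (deriv f 0).re with ha
  -- pointwise inequality for t > 0
  have hhelp : ∀ t : ℝ, 0 < t →
      z.im / ‖(z - (starRingEnd ℂ) ((t:ℂ)*I))‖ ^ 2
        ≤ (f z).im * (f ((t:ℂ)*I) / ((t:ℂ)*I)).re
            / ‖(f z - (starRingEnd ℂ) (f ((t:ℂ)*I)))‖ ^ 2 := by
    intro t ht
    have hwim : (((t:ℂ))*I).im = t := by simp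
    have hw : 0 < (((t:ℂ))*I).im := by rw [hwim]; exact ht
    have key := pick_inv f hfH hmap z ((t:ℂ)*I) hz hw
    rw [hwim] at key
    have hN : 0 < ‖(z - (starRingEnd ℂ) ((t:ℂ)*I))‖ ^ 2 := by
      have := norm_pos_iff.mpr (sub_conj_ne z _ hz hw); positivity
    have hD : 0 < ‖(f z - (starRingEnd ℂ) (f ((t:ℂ)*I)))‖ ^ 2 := by
      have := norm_pos_iff.mpr (sub_conj_ne _ _ (hmap z hz) (hmap _ hw)); positivity
    have hqre : (f ((t:ℂ)*I) / ((t:ℂ)*I)).re = (f ((t:ℂ)*I)).im / t := by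
      rw [Complex.div_re]
      simp [Complex.normSq_apply, Complex.mul_re, Complex.mul_im]
      field_simp
    rw [hqre]
    have e1 : z.im / ‖(z - (starRingEnd ℂ) ((t:ℂ)*I))‖ ^ 2
        = (z.im * t / ‖(z - (starRingEnd ℂ) ((t:ℂ)*I))‖ ^ 2) / t := by
      rw [div_div]
      exact (mul_div_mul_right _ _ (ne_of_gt ht)).symm
    have e2 : (f z).im * ((f ((t:ℂ)*I)).im / t)
          / ‖(f z - (starRingEnd ℂ) (f ((t:ℂ)*I)))‖ ^ 2
        = ((f z).im * (f ((t:ℂ)*I)).im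
            / ‖(f z - (starRingEnd ℂ) (f ((t:ℂ)*I)))‖ ^ 2) / t := by
      ring
    rw [e1, e2]
    exact (div_le_div_iff_of_pos_right ht).mpr key
  -- limits as t → 0⁺
  have hti : Tendsto (fun t : ℝ => (t:ℂ)*I) (𝓝[>] (0:ℝ)) (𝓝[≠] (0:ℂ)) := by
    rw [tendsto_nhdsWithin_iff]
    constructor
    · have h1 : Tendsto (fun t : ℝ => (t:ℂ)*I) (𝓝 (0:ℝ)) (𝓝 (((0:ℝ):ℂ)*I)) :=
        (Complex.continuous_ofReal.mul continuous_const).tendsto 0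
      simpa using h1.mono_left nhdsWithin_le_nhds
    · filter_upwards [self_mem_nhdsWithin] with t ht
      simp only [Set.mem_Ioi] at ht
      simp only [Set.mem_compl_iff, Set.mem_singleton_iff]
      intro h
      have : t = 0 := by simpa using congrArg Complex.im h
      linarith
  have hq : Tendsto (fun t : ℝ => f ((t:ℂ)*I) / ((t:ℂ)*I)) (𝓝[>] (0:ℝ)) (𝓝 (deriv f 0)) := by
    have hs := hasDerivAt_iff_tendsto_slope.1 hd0.hasDerivAt
    refine (hs.comp hti).congr fun t => ?_
    simp [Function.comp, slope_def_field, hfix]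
  have hq' : Tendsto (fun t : ℝ => (f ((t:ℂ)*I) / ((t:ℂ)*I)).re) (𝓝[>] (0:ℝ)) (𝓝 a) :=
    (Complex.continuous_re.tendsto _).comp hq
  have hf0 : Tendsto (fun t : ℝ => f ((t:ℂ)*I)) (𝓝[>] (0:ℝ)) (𝓝 0) := by
    have h1 : Tendsto (fun t : ℝ => f ((t:ℂ)*I)) (𝓝[>] (0:ℝ)) (𝓝 (f 0)) :=
      hd0.continuousAt.tendsto.comp (hti.mono_right nhdsWithin_le_nhds)
    simpa [hfix] using h1
  have hDten : Tendsto (fun t : ℝ => ‖(f z - (starRingEnd ℂ) (f ((t:ℂ)*I)))‖ ^ 2)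
      (𝓝[>] (0:ℝ)) (𝓝 (‖(f z)‖ ^ 2)) := by
    have h1 : Tendsto (fun t : ℝ => f z - (starRingEnd ℂ) (f ((t:ℂ)*I))) (𝓝[>] (0:ℝ))
        (𝓝 (f z - (starRingEnd ℂ) 0)) :=
      tendsto_const_nhds.sub ((Complex.continuous_conj.tendsto _).comp hf0)
    have h2 := (continuous_norm.tendsto _).comp h1
    simpa using h2.pow 2
  have hNten : Tendsto (fun t : ℝ => ‖(z - (starRingEnd ℂ) ((t:ℂ)*I))‖ ^ 2)
      (𝓝[>] (0:ℝ)) (𝓝 (‖z‖ ^ 2)) := by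
    have h0 : Tendsto (fun t : ℝ => (t:ℂ)*I) (𝓝[>] (0:ℝ)) (𝓝 (0:ℂ)) :=
      hti.mono_right nhdsWithin_le_nhds
    have h1 : Tendsto (fun t : ℝ => z - (starRingEnd ℂ) ((t:ℂ)*I)) (𝓝[>] (0:ℝ))
        (𝓝 (z - (starRingEnd ℂ) 0)) :=
      tendsto_const_nhds.sub ((Complex.continuous_conj.tendsto _).comp h0)
    have h2 := (continuous_norm.tendsto _).comp h1
    simpa using h2.pow 2
  have habsz : ‖z‖ ^ 2 ≠ 0 := by
    have := norm_pos_iff.mpr hz0; positivity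
  have habsfz : ‖(f z)‖ ^ 2 ≠ 0 := by
    have := norm_pos_iff.mpr hfz; positivity
  have hR : Tendsto (fun t : ℝ => z.im / ‖(z - (starRingEnd ℂ) ((t:ℂ)*I))‖ ^ 2)
      (𝓝[>] (0:ℝ)) (𝓝 (z.im / ‖z‖ ^ 2)) :=
    tendsto_const_nhds.div hNten habsz
  have hL : Tendsto (fun t : ℝ => (f z).im * (f ((t:ℂ)*I) / ((t:ℂ)*I)).re
      / ‖(f z - (starRingEnd ℂ) (f ((t:ℂ)*I)))‖ ^ 2)
      (𝓝[>] (0:ℝ)) (𝓝 ((f z).im * a / ‖(f z)‖ ^ 2)) :=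
    (tendsto_const_nhds.mul hq').div hDten habsfz
  have hfin := le_of_tendsto_of_tendsto hR hL
    (by filter_upwards [self_mem_nhdsWithin] with t ht using hhelp t ht)
  calc z.im / ‖z‖ ^ 2 ≤ (f z).im * a / ‖(f z)‖ ^ 2 := hfin
    _ = a * (f z).im / ‖(f z)‖ ^ 2 := by ring

open Filter Topology

/-- Equality case of Julia's inequality: equality at one point forces `f` to be a
Möbius transformation with real coefficients and positive determinant. -/
theorem julia_inequality_equality_case
    (U : Set ℂ) (hU : IsOpen U) (hUH : {z : ℂ | 0 < z.im} ⊆ U) (h0U : (0 : ℂ) ∈ U)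
    (f : ℂ → ℂ) (hf : DifferentiableOn ℂ f U)
    (hmap : ∀ z : ℂ, 0 < z.im → 0 < (f z).im)
    (hfix : f 0 = 0)
    (hnc : ¬ ∃ w : ℂ, ∀ z : ℂ, 0 < z.im → f z = w)
    (z₀ : ℂ) (hz₀ : 0 < z₀.im)
    (heq : (deriv f 0).re * (f z₀).im / ‖(f z₀)‖ ^ 2
            = z₀.im / ‖z₀‖ ^ 2) :
    ∃ a b c d : ℝ, a * d - b * c > 0 ∧
      ∀ z : ℂ, 0 < z.im → f z = ((a : ℂ) * z + b) / ((c : ℂ) * z + d) := by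
  have hopen : IsOpen {z : ℂ | 0 < z.im} := isOpen_lt continuous_const Complex.continuous_im
  set a : ℝ := (deriv f 0).re with ha
  have hj : ∀ z : ℂ, 0 < z.im →
      z.im / ‖z‖ ^ 2 ≤ a * (f z).im / ‖(f z)‖ ^ 2 :=
    fun z hz => julia U hU hUH h0U f hf hmap hfix z hz
  have hne0 : ∀ w : ℂ, 0 < w.im → w ≠ 0 := by
    intro w hw h; rw [h] at hw; simp at hw
  have hfne0 : ∀ w : ℂ, 0 < w.im → f w ≠ 0 := fun w hw => hne0 _ (hmap w hw)
  have hz₀0 : z₀ ≠ 0 := hne0 z₀ hz₀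
  have hfz₀ : f z₀ ≠ 0 := hfne0 z₀ hz₀
  have habsz₀ : 0 < ‖z₀‖ ^ 2 := by have := norm_pos_iff.mpr hz₀0; positivity
  have habsfz₀ : 0 < ‖(f z₀)‖ ^ 2 := by have := norm_pos_iff.mpr hfz₀; positivity
  have hapos : 0 < a := by
    have h1 : 0 < z₀.im / ‖z₀‖ ^ 2 := div_pos hz₀ habsz₀
    rw [← heq] at h1
    have h4 := mul_pos h1 habsfz₀
    rw [div_mul_cancel₀ _ (ne_of_gt habsfz₀)] at h4
    rcases mul_pos_iff.1 h4 with ⟨h, _⟩ | ⟨_, h⟩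
    · exact h
    · linarith [hmap z₀ hz₀]
  have haC : ((a:ℂ)) ≠ 0 := by exact_mod_cast hapos.ne'
  set H : ℂ → ℂ := fun z => ((a:ℂ) * z)⁻¹ - (f z)⁻¹ with hH
  have hImH_eq : ∀ w : ℂ, w ≠ 0 → f w ≠ 0 →
      (H w).im = (f w).im / Complex.normSq (f w) - w.im / (a * Complex.normSq w) := by
    intro w hw0 hfw
    have hnq : Complex.normSq w ≠ 0 := (Complex.normSq_pos.2 hw0).ne'
    simp only [hH, Complex.sub_im, Complex.inv_im, Complex.normSq_mul,
      Complex.mul_im, Complex.ofReal_re, Complex.ofReal_im, Complex.normSq_ofReal]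
    field_simp
    ring
  have hImH : ∀ w : ℂ, 0 < w.im → 0 ≤ (H w).im := by
    intro w hw
    have hw0 := hne0 w hw
    have hfw := hfne0 w hw
    have hnq : 0 < Complex.normSq w := Complex.normSq_pos.2 hw0
    have hnqf : 0 < Complex.normSq (f w) := Complex.normSq_pos.2 hfw
    have hj' := hj w hw
    rw [Complex.sq_norm, Complex.sq_norm] at hj'
    rw [hImH_eq w hw0 hfw, sub_nonneg, div_le_div_iff₀ (mul_pos hapos hnq) hnqf]
    rw [div_le_div_iff₀ hnq hnqf] at hj'
    nlinarith
  have hImHz₀ : (H z₀).im = 0 := by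
    rw [hImH_eq z₀ hz₀0 hfz₀]
    rw [Complex.sq_norm, Complex.sq_norm] at heq
    have hnq : 0 < Complex.normSq z₀ := Complex.normSq_pos.2 hz₀0
    have hnqf : 0 < Complex.normSq (f z₀) := Complex.normSq_pos.2 hfz₀
    field_simp at heq ⊢
    nlinarith [heq]
  have hHdiff : DifferentiableOn ℂ H {z : ℂ | 0 < z.im} := by
    intro w hw
    have hw0 := hne0 w hw
    have hfw := hfne0 w hw
    have h1 : DifferentiableAt ℂ f w := hf.differentiableAt (hU.mem_nhds (hUH hw))
    exact ((((differentiableAt_const _).mul differentiableAt_id).inv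
      (mul_ne_zero haC hw0)).sub (h1.inv hfw)).differentiableWithinAt
  have hana : AnalyticOnNhd ℂ H {z : ℂ | 0 < z.im} := hHdiff.analyticOnNhd hopen
  have hconn : IsPreconnected {z : ℂ | 0 < z.im} := (convex_halfSpace_im_gt 0).isPreconnected
  rcases hana.is_constant_or_isOpen hconn with ⟨c, hc⟩ | hopenmap
  · -- constant case
    have hcz₀ : H z₀ = c := hc z₀ hz₀
    set r : ℝ := c.re with hr
    have hcr : c = (r:ℂ) := by
      apply Complex.ext
      · simp [hr]
      · rw [← hcz₀]; simp [hImHz₀]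
    refine ⟨a, 0, -(r*a), 1, by simpa using hapos, fun z hz => ?_⟩
    have hz0' := hne0 z hz
    have hfz' := hfne0 z hz
    have haz : (a:ℂ) * z ≠ 0 := mul_ne_zero haC hz0'
    have hcz : ((a:ℂ) * z)⁻¹ - (f z)⁻¹ = (r:ℂ) := by
      have h2 := hc z hz; rw [hcr] at h2; exact h2
    have hinv : (f z)⁻¹ = (1 - (r:ℂ) * ((a:ℂ) * z)) / ((a:ℂ) * z) := by
      field_simp [hz0', hfz', haC] at hcz ⊢
      linear_combination -hcz
    have hden : (1:ℂ) - (r:ℂ) * ((a:ℂ) * z) ≠ 0 := by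
      intro h
      rw [h, zero_div] at hinv
      exact hfz' (inv_eq_zero.1 hinv)
    have hfeq : f z = ((a:ℂ) * z) / (1 - (r:ℂ) * ((a:ℂ) * z)) := by
      have h2 := congrArg Inv.inv hinv
      rwa [inv_inv, inv_div] at h2
    rw [hfeq]
    push_cast
    rw [div_eq_div_iff hden]
    · ring
    · intro h
      apply hden
      linear_combination h
  · -- open case: contradiction with Im H ≥ 0 and Im H z₀ = 0
    exfalso
    have himg : IsOpen (H '' {z : ℂ | 0 < z.im}) :=
      hopenmap _ (subset_refl _) hopen
    have hmem : H z₀ ∈ H '' {z : ℂ | 0 < z.im} := ⟨z₀, hz₀, rfl⟩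
    rcases Metric.isOpen_iff.1 himg _ hmem with ⟨ε, hε, hball⟩
    have hmem2 : H z₀ - ((ε/2 : ℝ) : ℂ) * I ∈ Metric.ball (H z₀) ε := by
      rw [Metric.mem_ball, dist_eq_norm]
      have : H z₀ - ((ε/2 : ℝ) : ℂ) * I - H z₀ = -(((ε/2 : ℝ) : ℂ) * I) := by ring
      rw [this, norm_neg]
      rw [norm_mul, Complex.norm_I, mul_one,
        Complex.norm_real, Real.norm_eq_abs, abs_of_pos (by linarith)]
      linarith
    rcases hball hmem2 with ⟨w, hw, hWw⟩
    have h1 := hImH w hw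
    rw [hWw] at h1
    simp only [Complex.sub_im, Complex.mul_im, Complex.I_im, Complex.I_re,
      Complex.ofReal_re, Complex.ofReal_im, hImHz₀] at h1
    linarith
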